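/- Let f : [0,1] → [0,1] be continuous with disjoint nonempty closed intervals I₀, I₁ and ℓ ≥ 1 such that f^ℓ(I₀) ⊇ I₀ ∪ I₁ and f^ℓ(I₁) ⊇ I₀ ∪ I₁. Then for every finite word w ∈ {0,1}^n there is a point p ∈ [0,1] periodic for f^ℓ with period dividing n whose itinerary relative to (I₀,I₁) realizes w. -/

import Mathlib

open Set

/-- Covering lemma, increasing orientation: if `g` is continuous on `[c,d]`, `x ≤ y` in `[c,d]`
with `g x = u`, `g y = v`, `u ≤ v`, then some subinterval of `[c,d]` maps exactly onto `[u,v]`. -/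
lemma horseshoe_cov_inc (g : ℝ → ℝ) {c d x y u v : ℝ} (hg : ContinuousOn g (Icc c d))
    (hx : x ∈ Icc c d) (hy : y ∈ Icc c d) (hxy : x ≤ y)
    (hgu : g x = u) (hgv : g y = v) (huv : u ≤ v) :
    ∃ c' d', c' ≤ d' ∧ Icc c' d' ⊆ Icc c d ∧ g '' Icc c' d' = Icc u v := by
  have hsubxy : Icc x y ⊆ Icc c d := Icc_subset_Icc hx.1 hy.2
  have hgxy : ContinuousOn g (Icc x y) := hg.mono hsubxy
  set S : Set ℝ := Icc x y ∩ g ⁻¹' {u} with hSdef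
  have hScl : IsClosed S :=
    hgxy.preimage_isClosed_of_isClosed isClosed_Icc isClosed_singleton
  have hSne : S.Nonempty := ⟨x, ⟨le_refl x, hxy⟩, hgu⟩
  have hSbdd : BddAbove S := ⟨y, fun t ht => ht.1.2⟩
  set c' := sSup S with hc'def
  have hc'S : c' ∈ S := hScl.csSup_mem hSne hSbdd
  have hgc' : g c' = u := hc'S.2
  set T : Set ℝ := Icc c' y ∩ g ⁻¹' {v} with hTdef
  have hTcl : IsClosed T :=
    (hgxy.mono (Icc_subset_Icc hc'S.1.1 le_rfl)).preimage_isClosed_of_isClosed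
      isClosed_Icc isClosed_singleton
  have hTne : T.Nonempty := ⟨y, ⟨hc'S.1.2, le_rfl⟩, hgv⟩
  have hTbdd : BddBelow T := ⟨c', fun t ht => ht.1.1⟩
  set d' := sInf T with hd'def
  have hd'T : d' ∈ T := hTcl.csInf_mem hTne hTbdd
  have hgd' : g d' = v := hd'T.2
  have hc'd' : c' ≤ d' := hd'T.1.1
  have hsub' : Icc c' d' ⊆ Icc x y := Icc_subset_Icc hc'S.1.1 hd'T.1.2
  have hsub'' : Icc c' d' ⊆ Icc c d := hsub'.trans hsubxy
  refine ⟨c', d', hc'd', hsub'', ?_⟩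
  apply Subset.antisymm
  · rintro _ ⟨t, ht, rfl⟩
    constructor
    · by_contra h
      push_neg at h
      have htd' : Icc t d' ⊆ Icc c d :=
        (Icc_subset_Icc ht.1 le_rfl).trans hsub''
      have : u ∈ Icc (g t) (g d') := ⟨h.le, hgd' ▸ huv⟩
      obtain ⟨s, hs, hgs⟩ := intermediate_value_Icc ht.2 (hg.mono htd') this
      have hsS : s ∈ S := ⟨⟨hc'S.1.1.trans (ht.1.trans hs.1), hs.2.trans hd'T.1.2⟩, hgs⟩
      have hsle : s ≤ c' := le_csSup hSbdd hsS
      have : t = s := le_antisymm hs.1 (hsle.trans ht.1)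
      rw [← this] at hgs
      exact absurd hgs (ne_of_lt h)
    · by_contra h
      push_neg at h
      have hct : Icc c' t ⊆ Icc c d :=
        (Icc_subset_Icc le_rfl ht.2).trans hsub''
      have : v ∈ Icc (g c') (g t) := ⟨hgc' ▸ huv, h.le⟩
      obtain ⟨s, hs, hgs⟩ := intermediate_value_Icc ht.1 (hg.mono hct) this
      have hsT : s ∈ T := ⟨⟨hs.1, (hs.2.trans ht.2).trans hd'T.1.2⟩, hgs⟩
      have hsle : d' ≤ s := csInf_le hTbdd hsT
      have : s = t := le_antisymm hs.2 (ht.2.trans hsle)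
      rw [this] at hgs
      exact absurd hgs (ne_of_gt h)
  · have := intermediate_value_Icc hc'd' (hg.mono hsub'')
    rwa [hgc', hgd'] at this

/-- Covering lemma, decreasing orientation. -/
lemma horseshoe_cov_dec (g : ℝ → ℝ) {c d x y u v : ℝ} (hg : ContinuousOn g (Icc c d))
    (hx : x ∈ Icc c d) (hy : y ∈ Icc c d) (hxy : x ≤ y)
    (hgu : g x = v) (hgv : g y = u) (huv : u ≤ v) :
    ∃ c' d', c' ≤ d' ∧ Icc c' d' ⊆ Icc c d ∧ g '' Icc c' d' = Icc u v := by
  have hsubxy : Icc x y ⊆ Icc c d := Icc_subset_Icc hx.1 hy.2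
  have hgxy : ContinuousOn g (Icc x y) := hg.mono hsubxy
  set S : Set ℝ := Icc x y ∩ g ⁻¹' {v} with hSdef
  have hScl : IsClosed S :=
    hgxy.preimage_isClosed_of_isClosed isClosed_Icc isClosed_singleton
  have hSne : S.Nonempty := ⟨x, ⟨le_refl x, hxy⟩, hgu⟩
  have hSbdd : BddAbove S := ⟨y, fun t ht => ht.1.2⟩
  set c' := sSup S with hc'def
  have hc'S : c' ∈ S := hScl.csSup_mem hSne hSbdd
  have hgc' : g c' = v := hc'S.2
  set T : Set ℝ := Icc c' y ∩ g ⁻¹' {u} with hTdef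
  have hTcl : IsClosed T :=
    (hgxy.mono (Icc_subset_Icc hc'S.1.1 le_rfl)).preimage_isClosed_of_isClosed
      isClosed_Icc isClosed_singleton
  have hTne : T.Nonempty := ⟨y, ⟨hc'S.1.2, le_rfl⟩, hgv⟩
  have hTbdd : BddBelow T := ⟨c', fun t ht => ht.1.1⟩
  set d' := sInf T with hd'def
  have hd'T : d' ∈ T := hTcl.csInf_mem hTne hTbdd
  have hgd' : g d' = u := hd'T.2
  have hc'd' : c' ≤ d' := hd'T.1.1
  have hsub' : Icc c' d' ⊆ Icc x y := Icc_subset_Icc hc'S.1.1 hd'T.1.2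
  have hsub'' : Icc c' d' ⊆ Icc c d := hsub'.trans hsubxy
  refine ⟨c', d', hc'd', hsub'', ?_⟩
  apply Subset.antisymm
  · rintro _ ⟨t, ht, rfl⟩
    constructor
    · by_contra h
      push_neg at h
      have hct : Icc c' t ⊆ Icc c d :=
        (Icc_subset_Icc le_rfl ht.2).trans hsub''
      have : u ∈ Icc (g t) (g c') := ⟨h.le, hgc' ▸ huv⟩
      obtain ⟨s, hs, hgs⟩ := intermediate_value_Icc' ht.1 (hg.mono hct) this
      have hsT : s ∈ T := ⟨⟨hs.1, (hs.2.trans ht.2).trans hd'T.1.2⟩, hgs⟩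
      have hsle : d' ≤ s := csInf_le hTbdd hsT
      have : s = t := le_antisymm hs.2 (ht.2.trans hsle)
      rw [this] at hgs
      exact absurd hgs (ne_of_lt h)
    · by_contra h
      push_neg at h
      have htd' : Icc t d' ⊆ Icc c d :=
        (Icc_subset_Icc ht.1 le_rfl).trans hsub''
      have : v ∈ Icc (g d') (g t) := ⟨hgd' ▸ huv, h.le⟩
      obtain ⟨s, hs, hgs⟩ := intermediate_value_Icc' ht.2 (hg.mono htd') this
      have hsS : s ∈ S := ⟨⟨hc'S.1.1.trans (ht.1.trans hs.1), hs.2.trans hd'T.1.2⟩, hgs⟩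
      have hsle : s ≤ c' := le_csSup hSbdd hsS
      have : t = s := le_antisymm hs.1 (hsle.trans ht.1)
      rw [← this] at hgs
      exact absurd hgs (ne_of_gt h)
  · have := intermediate_value_Icc' hc'd' (hg.mono hsub'')
    rwa [hgc', hgd'] at this

/-- Covering lemma: if `[u,v] ⊆ g([c,d])` then some subinterval maps exactly onto `[u,v]`. -/
lemma horseshoe_cov (g : ℝ → ℝ) {c d u v : ℝ} (hg : ContinuousOn g (Icc c d))
    (huv : u ≤ v) (hcov : Icc u v ⊆ g '' Icc c d) :
    ∃ c' d', c' ≤ d' ∧ Icc c' d' ⊆ Icc c d ∧ g '' Icc c' d' = Icc u v := by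
  obtain ⟨x, hx, hgx⟩ := hcov (left_mem_Icc.2 huv)
  obtain ⟨y, hy, hgy⟩ := hcov (right_mem_Icc.2 huv)
  rcases le_total x y with h | h
  · exact horseshoe_cov_inc g hg hx hy h hgx hgy huv
  · exact horseshoe_cov_dec g hg hy hx h hgy hgx huv

/-- Fixed point lemma: a continuous self-cover of an interval has a fixed point. -/
lemma horseshoe_fix (g : ℝ → ℝ) {α β u v : ℝ} (hg : ContinuousOn g (Icc α β)) (hαβ : α ≤ β)
    (him : g '' Icc α β = Icc u v) (hsub : Icc α β ⊆ Icc u v) :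
    ∃ p ∈ Icc α β, g p = p := by
  have hα : α ∈ Icc u v := hsub ⟨le_rfl, hαβ⟩
  have hβ : β ∈ Icc u v := hsub ⟨hαβ, le_rfl⟩
  have huv : u ≤ v := hα.1.trans hα.2
  obtain ⟨s, hs, hgs⟩ : ∃ s ∈ Icc α β, g s = u := by
    have : u ∈ g '' Icc α β := him ▸ left_mem_Icc.2 huv
    obtain ⟨s, hs1, hs2⟩ := this; exact ⟨s, hs1, hs2⟩
  obtain ⟨t, ht, hgt⟩ : ∃ t ∈ Icc α β, g t = v := by
    have : v ∈ g '' Icc α β := him ▸ right_mem_Icc.2 huv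
    obtain ⟨t, ht1, ht2⟩ := this; exact ⟨t, ht1, ht2⟩
  have hst : uIcc s t ⊆ Icc α β := uIcc_subset_Icc hs ht
  have hh : ContinuousOn (fun x => g x - x) (uIcc s t) :=
    ((hg.mono hst).sub (continuousOn_id.mono (subset_univ _)))
  have h0 : (0 : ℝ) ∈ uIcc (g s - s) (g t - t) := by
    rw [mem_uIcc]
    left
    constructor
    · rw [hgs]; linarith [hα.1, hs.1]
    · rw [hgt]; linarith [hβ.2, ht.2]
  obtain ⟨p, hp, hgp⟩ := intermediate_value_uIcc hh h0
  exact ⟨p, hst hp, by linarith [sub_eq_zero.mp hgp]⟩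

/-- Misiurewicz horseshoe: under the covering hypotheses, every finite word `w ∈ {0,1}^n`
is realized by a point `p` which is periodic for `f^ℓ` with period dividing `n` and whose
itinerary relative to `(I₀, I₁)` is `w`. -/
theorem horseshoe_realizes_all_periodic_itineraries
    (f : ℝ → ℝ) (hf : ContinuousOn f (Icc 0 1)) (hmaps : MapsTo f (Icc 0 1) (Icc 0 1))
    (ℓ : ℕ) (hℓ : 1 ≤ ℓ) (a b : Fin 2 → ℝ)
    (hne : ∀ j, a j ≤ b j) (hsub : ∀ j, Icc (a j) (b j) ⊆ Icc (0 : ℝ) 1)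
    (hdisj : Disjoint (Icc (a 0) (b 0)) (Icc (a 1) (b 1)))
    (hcover : ∀ j, Icc (a 0) (b 0) ∪ Icc (a 1) (b 1) ⊆ f^[ℓ] '' Icc (a j) (b j)) :
    ∀ n : ℕ, 1 ≤ n → ∀ w : Fin n → Fin 2,
      ∃ p ∈ Icc (0 : ℝ) 1,
        (∀ i : Fin n, f^[ℓ * i] p ∈ Icc (a (w i)) (b (w i))) ∧ f^[ℓ * n] p = p := by
  set g := f^[ℓ] with hgdef
  have hgc : ContinuousOn g (Icc 0 1) := hf.iterate hmaps ℓ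
  have hgm : MapsTo g (Icc 0 1) (Icc 0 1) := hmaps.iterate ℓ
  intro n hn w
  have hn0 : 0 < n := hn
  set W : ℕ → Fin 2 := fun k => if h : k < n then w ⟨k, h⟩ else w ⟨0, hn0⟩ with hWdef
  have hmem : ∀ j : Fin 2, Icc (a j) (b j) ⊆ Icc (a 0) (b 0) ∪ Icc (a 1) (b 1) := by
    intro j
    fin_cases j
    · exact subset_union_left
    · exact subset_union_right
  have key : ∀ k, 1 ≤ k →
      ∃ α β, α ≤ β ∧
        (∀ i, i < k → g^[i] '' Icc α β ⊆ Icc (a (W i)) (b (W i))) ∧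
        g^[k] '' Icc α β = Icc (a (W k)) (b (W k)) := by
    intro k hk
    induction k, hk using Nat.le_induction with
    | base =>
      have hc : Icc (a (W 1)) (b (W 1)) ⊆ g '' Icc (a (W 0)) (b (W 0)) :=
        (hmem (W 1)).trans (hcover (W 0))
      obtain ⟨c', d', h1, h2, h3⟩ :=
        horseshoe_cov g (hgc.mono (hsub (W 0))) (hne (W 1)) hc
      refine ⟨c', d', h1, ?_, by simpa using h3⟩
      intro i hi
      interval_cases i
      simpa using h2
    | succ k hk ih =>
      obtain ⟨α, β, hαβ, hnest, him⟩ := ih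
      have hA0 : Icc α β ⊆ Icc (a (W 0)) (b (W 0)) := by
        have := hnest 0 (by omega)
        simpa using this
      have hA01 : Icc α β ⊆ Icc (0 : ℝ) 1 := hA0.trans (hsub _)
      have hAcc : ContinuousOn (g^[k + 1]) (Icc α β) :=
        (hgc.iterate hgm (k + 1)).mono hA01
      have hc : Icc (a (W (k + 1))) (b (W (k + 1))) ⊆ g^[k + 1] '' Icc α β := by
        rw [Function.iterate_succ']
        rw [image_comp]
        rw [him]
        exact (hmem (W (k + 1))).trans (hcover (W k))
      obtain ⟨c', d', h1, h2, h3⟩ := horseshoe_cov (g^[k + 1]) hAcc (hne _) hc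
      refine ⟨c', d', h1, ?_, h3⟩
      intro i hi
      have hmono : g^[i] '' Icc c' d' ⊆ g^[i] '' Icc α β := image_mono h2
      rcases lt_or_ge i k with h | h
      · exact hmono.trans (hnest i h)
      · have : i = k := by omega
        subst this
        exact hmono.trans him.subset
  obtain ⟨α, β, hαβ, hnest, him⟩ := key n hn
  have hA0 : Icc α β ⊆ Icc (a (W 0)) (b (W 0)) := by
    have := hnest 0 hn0
    simpa using this
  have hA01 : Icc α β ⊆ Icc (0 : ℝ) 1 := hA0.trans (hsub _)
  have hWn : W n = W 0 := by simp [hWdef, lt_irrefl, hn0]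
  rw [hWn] at him
  obtain ⟨p, hp, hfix⟩ :=
    horseshoe_fix (g^[n]) ((hgc.iterate hgm n).mono hA01) hαβ him hA0
  refine ⟨p, hA01 hp, ?_, ?_⟩
  · intro i
    have hmemi : g^[(i : ℕ)] p ∈ Icc (a (W i)) (b (W i)) :=
      hnest i i.isLt ⟨p, hp, rfl⟩
    have hWi : W (i : ℕ) = w i := by simp [hWdef, i.isLt]
    rw [hgdef, ← Function.iterate_mul] at hmemi
    rwa [hWi] at hmemi
  · rw [Function.iterate_mul]
    exact hfix
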